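/- arXiv:2405.08664 — 2 statements merged into one kernel-verified Lean document; each statement's English description precedes it below -/
import Mathlib

section
/- For all x > 0, ∫_0^∞ e^{−x^2 y/2} √(1 + y/x) · dy/√(2π y) ≤ 1/x + 1/x^4. -/
open MeasureTheory

lemma sqrt_le_self' {a : ℝ} (ha : 1 ≤ a) : Real.sqrt a ≤ a := by
  have h1 := Real.sq_sqrt (by linarith : (0:ℝ) ≤ a)
  have h2 := Real.sqrt_nonneg a
  nlinarith

/-- For `x > 0`,
`∫_0^∞ e^{-x²y/2} √(1+y/x) dy/√(2πy) ≤ 1/x + 1/x⁴`. -/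
theorem integral_J1_bound (x : ℝ) (hx : 0 < x) :
    (∫ y in Set.Ioi (0 : ℝ),
        Real.exp (-x ^ 2 * y / 2) * Real.sqrt (1 + y / x) /
          Real.sqrt (2 * Real.pi * y)) ≤ 1 / x + 1 / x ^ 4 := by
  set b : ℝ := x ^ 2 / 2 with hb_def
  have hb : 0 < b := by positivity
  have hpi : 0 < Real.pi := Real.pi_pos
  set c1 : ℝ := 1 / Real.sqrt (2 * Real.pi) with hc1
  set c2 : ℝ := 1 / (x * Real.sqrt (2 * Real.pi)) with hc2
  set f : ℝ → ℝ := fun y =>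
    Real.exp (-x ^ 2 * y / 2) * Real.sqrt (1 + y / x) /
      Real.sqrt (2 * Real.pi * y) with hf
  set g : ℝ → ℝ := fun y =>
    c1 * (y ^ (-(1/2) : ℝ) * Real.exp (-(b * y))) +
    c2 * (y ^ ((1/2) : ℝ) * Real.exp (-(b * y))) with hg
  have hS : 0 < Real.sqrt (2 * Real.pi) := Real.sqrt_pos.2 (by positivity)
  -- integrability of the two pieces
  have hint1 : IntegrableOn (fun y : ℝ => y ^ (-(1/2) : ℝ) * Real.exp (-(b * y)))
      (Set.Ioi 0) := by
    have := integrableOn_rpow_mul_exp_neg_mul_rpow (p := 1) (s := -(1/2)) (b := b)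
      (by norm_num) one_pos hb
    simpa [Real.rpow_one] using this
  have hint2 : IntegrableOn (fun y : ℝ => y ^ ((1/2) : ℝ) * Real.exp (-(b * y)))
      (Set.Ioi 0) := by
    have := integrableOn_rpow_mul_exp_neg_mul_rpow (p := 1) (s := (1/2)) (b := b)
      (by norm_num) one_pos hb
    simpa [Real.rpow_one] using this
  have hgint : IntegrableOn g (Set.Ioi 0) :=
    (hint1.const_mul c1).add (hint2.const_mul c2)
  -- pointwise bound
  have hpt : ∀ y ∈ Set.Ioi (0:ℝ), f y ≤ g y := by
    intro y hy
    have hy0 : 0 < y := hy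
    have hexp : -x ^ 2 * y / 2 = -(b * y) := by rw [hb_def]; ring
    have hs0 : 0 < Real.sqrt y := Real.sqrt_pos.2 hy0
    have hsplit : Real.sqrt (2 * Real.pi * y) = Real.sqrt (2 * Real.pi) * Real.sqrt y :=
      Real.sqrt_mul (by positivity) y
    have hsqrtle : Real.sqrt (1 + y / x) ≤ 1 + y / x :=
      sqrt_le_self' (by nlinarith [div_pos hy0 hx])
    have hE : 0 < Real.exp (-(b * y)) := Real.exp_pos _
    have step1 : f y ≤ Real.exp (-(b * y)) * (1 + y / x) / Real.sqrt (2 * Real.pi * y) := by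
      rw [hf]; simp only []
      rw [hexp]
      gcongr
    refine step1.trans_eq ?_
    rw [hg]; simp only []
    rw [Real.rpow_neg hy0.le, ← Real.sqrt_eq_rpow, hsplit, hc1, hc2]
    set s := Real.sqrt y with hsdef
    have hsq : s ^ 2 = y := Real.sq_sqrt hy0.le
    rw [← hsq]
    have hx0 : x ≠ 0 := hx.ne'
    have hs0' : s ≠ 0 := hs0.ne'
    have hS0 : Real.sqrt (2 * Real.pi) ≠ 0 := hS.ne'
    field_simp
  -- integrability of f
  have hfmeas : AEStronglyMeasurable f (volume.restrict (Set.Ioi 0)) := by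
    apply Measurable.aestronglyMeasurable
    rw [hf]
    fun_prop
  have hfint : IntegrableOn f (Set.Ioi 0) := by
    refine Integrable.mono' hgint hfmeas ?_
    rw [ae_restrict_iff' measurableSet_Ioi]
    filter_upwards with y hy
    have hy0 : 0 < y := hy
    have hfpos : 0 ≤ f y := by
      rw [hf]; simp only []
      have h1 : 0 ≤ 1 + y / x := by positivity
      positivity
    rw [Real.norm_eq_abs, abs_of_nonneg hfpos]
    exact hpt y hy
  -- compare integrals
  have hle : (∫ y in Set.Ioi (0:ℝ), f y) ≤ ∫ y in Set.Ioi (0:ℝ), g y :=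
    setIntegral_mono_on hfint hgint measurableSet_Ioi hpt
  refine hle.trans ?_
  -- compute ∫ g
  have e1 : (∫ y in Set.Ioi (0:ℝ), y ^ (-(1/2) : ℝ) * Real.exp (-(b * y)))
      = (1 / b) ^ ((1/2) : ℝ) * Real.Gamma (1/2) := by
    rw [← Real.integral_rpow_mul_exp_neg_mul_Ioi (by norm_num : (0:ℝ) < 1/2) hb]
    norm_num
  have e2 : (∫ y in Set.Ioi (0:ℝ), y ^ ((1/2) : ℝ) * Real.exp (-(b * y)))
      = (1 / b) ^ ((3/2) : ℝ) * Real.Gamma (3/2) := by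
    rw [← Real.integral_rpow_mul_exp_neg_mul_Ioi (by norm_num : (0:ℝ) < 3/2) hb]
    norm_num
  have hG12 : Real.Gamma (1/2) = Real.sqrt Real.pi := Real.Gamma_one_half_eq
  have hG32 : Real.Gamma (3/2) = Real.sqrt Real.pi / 2 := by
    rw [show (3/2 : ℝ) = 1/2 + 1 by norm_num, Real.Gamma_add_one (by norm_num), hG12]
    ring
  have hrb : (1 / b) ^ ((1/2) : ℝ) = Real.sqrt 2 / x := by
    rw [← Real.sqrt_eq_rpow, hb_def, show (1 : ℝ) / (x^2/2) = 2 / x^2 by field_simp,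
      Real.sqrt_div (by norm_num : (0:ℝ) ≤ 2), Real.sqrt_sq hx.le]
  have hrb3 : (1 / b) ^ ((3/2) : ℝ) = 2 * Real.sqrt 2 / x ^ 3 := by
    rw [show (3/2 : ℝ) = (1/2) * (3:ℕ) by norm_num, Real.rpow_mul (by positivity), hrb,
      Real.rpow_natCast, div_pow, pow_succ, Real.sq_sqrt (by norm_num : (0:ℝ) ≤ 2)]
  have hsplit2 : Real.sqrt (2 * Real.pi) = Real.sqrt 2 * Real.sqrt Real.pi :=
    Real.sqrt_mul (by norm_num) _
  have hint : (∫ y in Set.Ioi (0:ℝ), g y) = 1 / x + 1 / x ^ 4 := by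
    rw [hg]
    rw [integral_add (hint1.const_mul c1) (hint2.const_mul c2),
      integral_const_mul, integral_const_mul, e1, e2, hG12, hG32, hrb, hrb3, hc1, hc2,
      hsplit2]
    have h2 : (0:ℝ) < Real.sqrt 2 := Real.sqrt_pos.2 (by norm_num)
    have hp : (0:ℝ) < Real.sqrt Real.pi := Real.sqrt_pos.2 hpi
    field_simp
  rw [hint]
end

section
/- Comparison of an under-solution with an over-solution along a one-sided derivative: let t_0 ∈ ℝ, let u : [t_0,∞) → ℝ be nondecreasing with left limits and left/right derivatives, let u_2 : [t_0,∞) → ℝ be C^1, and let f : [t_0,∞) × ℝ → ℝ be strictly decreasing in its second variable. Assume u_2(t_0) < u(t_0), u_2'(t) < f(t, u_2(t)) for all t, and ∂_- u(t) ≥ f(t, u(t−)) for all t > t_0. Then u_2(t) < u(t) for all t ≥ t_0. -/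
open Set Filter

/-- Comparison of an under-solution `u₂` with an over-solution `u` along a
left derivative: if `u` is nondecreasing on `[t₀,∞)` with left limits `uL` and
left derivatives `Du`, `u₂` is C¹, `f` is strictly decreasing in its second
variable, `u₂ t₀ < u t₀`, `u₂' (t) < f(t, u₂ t)` for all `t ≥ t₀` and
`Du t ≥ f(t, uL t)` for all `t > t₀`, then `u₂ t < u t` for all `t ≥ t₀`. -/
theorem undersolution_comparison (t₀ : ℝ) (u u₂ uL Du : ℝ → ℝ) (f : ℝ → ℝ → ℝ)
    (hu_mono : MonotoneOn u (Ici t₀))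
    (huL : ∀ t, t₀ < t → Tendsto u (nhdsWithin t (Iio t)) (nhds (uL t)))
    (hDu : ∀ t, t₀ < t →
      Tendsto (fun h : ℝ => (u (t + h) - uL t) / h)
        (nhdsWithin 0 (Iio 0)) (nhds (Du t)))
    (hu₂ : ContDiff ℝ 1 u₂)
    (hf : ∀ t a b : ℝ, a < b → f t b < f t a)
    (h₀ : u₂ t₀ < u t₀)
    (hsub : ∀ t, t₀ ≤ t → deriv u₂ t < f t (u₂ t))
    (hsup : ∀ t, t₀ < t → f t (uL t) ≤ Du t) :
    ∀ t, t₀ ≤ t → u₂ t < u t := by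
  by_contra hcon
  push_neg at hcon
  obtain ⟨t₁, ht₁, ht₁'⟩ := hcon
  set S : Set ℝ := {t | t₀ ≤ t ∧ u t ≤ u₂ t} with hS
  have hne : S.Nonempty := ⟨t₁, ht₁, ht₁'⟩
  have hbdd : BddBelow S := ⟨t₀, fun t ht => ht.1⟩
  set s := sInf S with hs
  have hst₀ : t₀ ≤ s := le_csInf hne fun t ht => ht.1
  have hc : ContinuousAt u₂ s := hu₂.continuous.continuousAt
  -- s ∈ S
  have hmemS : u s ≤ u₂ s := by
    by_contra hlt
    push_neg at hlt
    have hev : ∀ᶠ t in nhds s, u₂ t < u s := hc.eventually_lt_const hlt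
    obtain ⟨δ, hδ, hδ'⟩ := Metric.eventually_nhds_iff.mp hev
    obtain ⟨t, htS, ht⟩ := (csInf_lt_iff hbdd hne).mp (by linarith : sInf S < s + δ)
    have hst : s ≤ t := csInf_le hbdd htS
    have : u₂ t < u s := hδ' (by rw [Real.dist_eq, abs_of_nonneg (by linarith)]; linarith)
    have : u s ≤ u t := hu_mono hst₀ (hst₀.trans hst) hst
    linarith [htS.2]
  have hlt₀ : t₀ < s := by
    rcases lt_or_eq_of_le hst₀ with h | h
    · exact h
    · exfalso; rw [← h] at hmemS; linarith
  have hbefore : ∀ t, t₀ ≤ t → t < s → u₂ t < u t := by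
    intro t ht hts
    by_contra h
    push_neg at h
    exact absurd (csInf_le hbdd ⟨ht, h⟩) (not_le.mpr hts)
  -- left limit equals value equals u₂ s
  have hIoo : Ioo t₀ s ∈ nhdsWithin s (Iio s) := Ioo_mem_nhdsLT_of_mem ⟨hlt₀, le_refl s⟩
  have h1 : Tendsto u₂ (nhdsWithin s (Iio s)) (nhds (u₂ s)) :=
    hc.tendsto.mono_left nhdsWithin_le_nhds
  have h2 := huL s hlt₀
  have hle1 : u₂ s ≤ uL s := by
    refine le_of_tendsto_of_tendsto h1 h2 ?_
    filter_upwards [hIoo] with t ht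
    exact (hbefore t ht.1.le ht.2).le
  have hle2 : uL s ≤ u s := by
    refine le_of_tendsto h2 ?_
    filter_upwards [hIoo] with t ht
    exact hu_mono ht.1.le hst₀ ht.2.le
  have huLs : uL s = u₂ s := le_antisymm (hle2.trans hmemS) hle1
  -- difference quotient for u₂ from the left
  have hd : HasDerivAt u₂ (deriv u₂ s) s :=
    ((hu₂.differentiable one_ne_zero) s).hasDerivAt
  have hmap : Tendsto (fun h : ℝ => s + h) (nhdsWithin 0 (Iio 0))
      (nhdsWithin s ({s}ᶜ)) := by
    apply tendsto_nhdsWithin_of_tendsto_nhds_of_eventually_within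
    · have : Tendsto (fun h : ℝ => s + h) (nhds 0) (nhds (s + 0)) :=
        (continuous_const.add continuous_id).tendsto 0
      simpa using this.mono_left nhdsWithin_le_nhds
    · filter_upwards [self_mem_nhdsWithin] with h hh
      exact ne_of_lt (by linarith [mem_Iio.mp hh] : s + h < s)
  have hq2 : Tendsto (fun h : ℝ => (u₂ (s + h) - u₂ s) / h) (nhdsWithin 0 (Iio 0))
      (nhds (deriv u₂ s)) := by
    have := (hasDerivAt_iff_tendsto_slope.mp hd).comp hmap
    refine this.congr' ?_
    filter_upwards [self_mem_nhdsWithin] with h hh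
    have hh0 : h ≠ 0 := ne_of_lt (mem_Iio.mp hh)
    simp [Function.comp, slope_def_field, div_eq_div_iff, hh0]
  have hq1 : Tendsto (fun h : ℝ => (u (s + h) - u₂ s) / h) (nhdsWithin 0 (Iio 0))
      (nhds (Du s)) := by
    have := hDu s hlt₀
    rwa [huLs] at this
  have hDule : Du s ≤ deriv u₂ s := by
    refine le_of_tendsto_of_tendsto hq1 hq2 ?_
    have hmem : Ioo (t₀ - s) 0 ∈ nhdsWithin 0 (Iio 0) :=
      Ioo_mem_nhdsLT_of_mem ⟨by linarith, le_refl _⟩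
    filter_upwards [hmem] with h hh
    have h0 : h < 0 := hh.2
    have ht0 : t₀ ≤ s + h := by linarith [hh.1]
    have hlt : u₂ (s + h) < u (s + h) := hbefore _ ht0 (by linarith)
    have : u₂ (s + h) - u₂ s ≤ u (s + h) - u₂ s := by linarith
    exact div_le_div_of_nonpos_of_le h0.le this
  have := hsub s hst₀
  have := hsup s hlt₀
  rw [huLs] at this
  linarith
end
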